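/- Let (Ω,ℱ,ℙ) be a probability space with expectation 𝔼. For each t ≥ 0 and ω ∈ Ω let m_{t,ω} be a Borel measure on [0,∞) with total mass m_{t,ω}([0,∞)) ≤ 1, jointly measurable in (t,ω) so that all integrals below are defined, and define the measure m(E) := 𝔼 ∫_0^∞ m_{t,·}(E) dt. Let W : Ω × [0,∞) → [0,∞] be jointly measurable, let p > 1 with conjugate exponent q = p/(p−1), and suppose 𝔼 W_t^p ≤ 𝔼 W_0^p < ∞ for all t ≥ 0. Let w be a weight with ∫_0^∞ w(s)^{−1} ds ≤ 1/2. Let N₀ ≥ 1, C₀ ≥ 1, and R ≥ max(N₀², 4), and suppose that for every r ∈ [max(C₀, N₀), R] one has 𝔼 ∫_0^{C₀ log R} W_t · (w^{−1} * m_{t,·})(r) dt ≥ 1/(C₀ r). Then there is a constant C depending only on C₀ and N₀ such that for every α > 0: μ_{N₀,R}( { r ∈ [max(C₀,N₀), R] : (w^{−1} * m)(r) ≤ α/r } ) ≤ C^p (𝔼 W_0^p) α^{p−1}. -/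

import Mathlib

open MeasureTheory ENNReal Real Set
open scoped Classical

noncomputable section

/-- Euclidean norm of a lattice point `k ∈ ℤ^d`. -/
def znorm {d : ℕ} (k : Fin d → ℤ) : ℝ := Real.sqrt (∑ i, ((k i : ℝ)) ^ 2)

/-- Euclidean norm of a vector in `ℂ^d`. -/
def cnorm {d : ℕ} (z : Fin d → ℂ) : ℝ := Real.sqrt (∑ i, ‖z i‖ ^ 2)

/-- Pairing `k · z = Σ_i k_i z_i`. -/
def zdot {d : ℕ} (k : Fin d → ℤ) (z : Fin d → ℂ) : ℂ := ∑ i, (k i : ℂ) * z i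

/-- Divergence-free in Fourier variables: `k · v(k) = 0` for all `k`. -/
def DivFree {d : ℕ} (v : (Fin d → ℤ) → Fin d → ℂ) : Prop := ∀ k, zdot k (v k) = 0

/-- Fourier coefficients of a real vector field: `v(-k) = conj (v k)`. -/
def RealCoeff {d : ℕ} (v : (Fin d → ℤ) → Fin d → ℂ) : Prop :=
  ∀ k i, v (-k) i = starRingEnd ℂ (v k i)

/-- A weight: nondecreasing on `[0,∞)` with values in `[1,∞]`. -/
def IsWeight (w : ℝ → ℝ≥0∞) : Prop :=
  MonotoneOn w (Set.Ici 0) ∧ ∀ s, 0 ≤ s → 1 ≤ w s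

/-- Weighted ℓ¹ norm `‖w v‖_{ℓ¹} = Σ_k w(|k|)|v(k)|`. -/
def wl1 {d : ℕ} (w : ℝ → ℝ≥0∞) (v : (Fin d → ℤ) → Fin d → ℂ) : ℝ≥0∞ :=
  ∑' k, w (znorm k) * ENNReal.ofReal (cnorm (v k))

/-- `(w⁻¹ * m_a)(r) = Σ_k w(||k|-r|)⁻¹ |a(k)|²`. -/
def convMass {d : ℕ} (w : ℝ → ℝ≥0∞) (a : (Fin d → ℤ) → ℂ) (r : ℝ) : ℝ≥0∞ :=
  ∑' k, (w |znorm k - r|)⁻¹ * (‖a k‖₊ : ℝ≥0∞) ^ 2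

/-- `m_a(E) = Σ_{|k| ∈ E} |a(k)|²`. -/
def massOn {d : ℕ} (a : (Fin d → ℤ) → ℂ) (E : Set ℝ) : ℝ≥0∞ :=
  ∑' k, if znorm k ∈ E then (‖a k‖₊ : ℝ≥0∞) ^ 2 else 0

/-- Logarithmic density measure `μ_{a,b}(E)`. -/
def logDensity (a b : ℝ) (E : Set ℝ) : ℝ≥0∞ :=
  (ENNReal.ofReal (Real.log (b / a)))⁻¹ * ∫⁻ r in E ∩ Set.Icc a b, ENNReal.ofReal r⁻¹

/-- The right-hand side of the Fourier advection–diffusion system. -/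
def fourierRHS {d : ℕ} (ν : ℝ) (v : (Fin d → ℤ) → Fin d → ℂ) (a : (Fin d → ℤ) → ℂ)
    (k : Fin d → ℤ) : ℂ :=
  Complex.ofReal (-(4 * π ^ 2 * ν * znorm k ^ 2)) * a k
    - 2 * Complex.ofReal π * Complex.I * ∑' j, zdot k (v (k - j)) * a j


set_option maxHeartbeats 1000000 in
/-- if the expected time-localized flux is at least `1/(C₀ r)` for all radii
in `[max(C₀,N₀), R]`, then the radii where the convolved aggregate mass `(w⁻¹ * m)(r)` is
undercharged have small logarithmic density. -/
theorem undercharged_convolved_density_bound (C₀ N₀ : ℝ) (hC₀ : 1 ≤ C₀) (hN₀ : 1 ≤ N₀) :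
    ∃ C : ℝ, 0 < C ∧
      ∀ (Ω : Type) [MeasurableSpace Ω] (ℙ : Measure Ω) [IsProbabilityMeasure ℙ]
        (m : Ω → ℝ → Measure ℝ),
      (∀ (ω : Ω) (t : ℝ), m ω t Set.univ ≤ 1) →
      (∀ (ω : Ω) (t : ℝ), m ω t (Set.Iio 0) = 0) →
      (∀ E : Set ℝ, MeasurableSet E → Measurable fun p : Ω × ℝ => m p.1 p.2 E) →
      ∀ (W : Ω → ℝ → ℝ≥0∞), Measurable (fun p : Ω × ℝ => W p.1 p.2) →
      ∀ p : ℝ, 1 < p →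
      (∀ t : ℝ, 0 ≤ t → (∫⁻ ω, W ω t ^ p ∂ℙ) ≤ ∫⁻ ω, W ω 0 ^ p ∂ℙ) →
      (∫⁻ ω, W ω 0 ^ p ∂ℙ) ≠ ⊤ →
      ∀ (w : ℝ → ℝ≥0∞), IsWeight w →
      (∫⁻ s in Set.Ici (0 : ℝ), (w s)⁻¹) ≤ 1 / 2 →
      ∀ R : ℝ, max (N₀ ^ 2) 4 ≤ R →
      (∀ r : ℝ, r ∈ Set.Icc (max C₀ N₀) R →
        ENNReal.ofReal (1 / (C₀ * r)) ≤
          ∫⁻ ω, (∫⁻ t in Set.Ioc 0 (C₀ * Real.log R),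
            W ω t * ∫⁻ z in Set.Ici (0 : ℝ), (w |r - z|)⁻¹ ∂(m ω t)) ∂ℙ) →
      ∀ α : ℝ, 0 < α →
        logDensity N₀ R {r : ℝ | r ∈ Set.Icc (max C₀ N₀) R ∧
            (∫⁻ ω, (∫⁻ t in Set.Ici (0 : ℝ),
              ∫⁻ z in Set.Ici (0 : ℝ), (w |r - z|)⁻¹ ∂(m ω t)) ∂ℙ) ≤ ENNReal.ofReal (α / r)}
          ≤ ENNReal.ofReal (C ^ p) * (∫⁻ ω, W ω 0 ^ p ∂ℙ) * ENNReal.ofReal (α ^ (p - 1)) := by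
  refine ⟨2 * C₀ ^ 2, by positivity, ?_⟩
  intro Ω _ ℙ _ m hm1 hm0 hmE W hW p hp hWt hWfin w hw hwhalf R hR hflux α hα
  obtain ⟨hwmono, hwone⟩ := hw
  -- basic positivity facts
  have hC₀0 : (0:ℝ) < C₀ := lt_of_lt_of_le one_pos hC₀
  have hN₀0 : (0:ℝ) < N₀ := lt_of_lt_of_le one_pos hN₀
  have hR4 : (4:ℝ) ≤ R := le_trans (le_max_right _ _) hR
  have hRN : N₀ ^ 2 ≤ R := le_trans (le_max_left _ _) hR
  have hR1 : (1:ℝ) < R := by linarith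
  have hlogR : 0 < Real.log R := Real.log_pos hR1
  set T : ℝ := C₀ * Real.log R with hT
  have hT0 : 0 < T := mul_pos hC₀0 hlogR
  set q : ℝ := p.conjExponent with hq
  have hpq : p.HolderConjugate q := Real.HolderConjugate.conjExponent hp
  have hp0 : (0:ℝ) < p := lt_trans one_pos hp
  have hq0 : (0:ℝ) < q := hpq.symm.pos
  set β : ℝ≥0∞ := ∫⁻ ω, W ω 0 ^ p ∂ℙ with hβ
  -- the modified weight
  set w' : ℝ → ℝ≥0∞ := fun s => w (max s 0) with hw'
  have hw'mono : Monotone w' := fun a b hab => hwmono (Set.mem_Ici.mpr (le_max_right _ _)) (Set.mem_Ici.mpr (le_max_right _ _))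
    (max_le_max hab le_rfl)
  have hw'meas : Measurable w' := hw'mono.measurable
  have hwe : ∀ s : ℝ, w |s| = w' |s| := by
    intro s; simp only [hw', max_eq_left (abs_nonneg s)]
  have hw'one : ∀ s : ℝ, 1 ≤ w' s := fun s => hwone _ (le_max_right _ _)
  -- ff
  set ff : Ω → ℝ → ℝ → ℝ≥0∞ := fun ω t r => ∫⁻ z in Set.Ici (0:ℝ), (w' |r - z|)⁻¹ ∂(m ω t)
    with hffdef
  have hffe : ∀ (ω : Ω) (t r : ℝ),
      (∫⁻ z in Set.Ici (0:ℝ), (w |r - z|)⁻¹ ∂(m ω t)) = ff ω t r := by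
    intro ω t r
    exact lintegral_congr fun z => by rw [hwe]
  -- kernel machinery for measurability
  have hκmeas : Measurable (fun pa : Ω × ℝ => m pa.1 pa.2) :=
    Measure.measurable_of_measurable_coe _ hmE
  set κ : ProbabilityTheory.Kernel (Ω × ℝ) ℝ := ⟨fun pa => m pa.1 pa.2, hκmeas⟩ with hκ
  haveI : ProbabilityTheory.IsFiniteKernel κ :=
    ⟨1, ENNReal.one_lt_top, fun pa => hm1 pa.1 pa.2⟩
  set κ2 : ProbabilityTheory.Kernel (ℝ × (Ω × ℝ)) ℝ :=
    (κ.comap Prod.snd measurable_snd).restrict (measurableSet_Ici (a := (0:ℝ))) with hκ2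
  have hκ2app : ∀ x : ℝ × (Ω × ℝ), κ2 x = (m x.2.1 x.2.2).restrict (Set.Ici 0) := by
    intro x
    rw [hκ2, ProbabilityTheory.Kernel.restrict_apply, ProbabilityTheory.Kernel.comap_apply]
    rfl
  set FF : ℝ × (Ω × ℝ) → ℝ≥0∞ := fun x => ff x.2.1 x.2.2 x.1 with hFF
  have hFFmeas : Measurable FF := by
    have h1 : Measurable (fun y : (ℝ × (Ω × ℝ)) × ℝ => (w' |y.1.1 - y.2|)⁻¹) :=
      ((hw'meas.comp ((measurable_fst.comp measurable_fst).sub measurable_snd).abs)).inv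
    have h2 := h1.lintegral_kernel_prod_right' (κ := κ2)
    have : FF = fun x : ℝ × (Ω × ℝ) => ∫⁻ z, (w' |x.1 - z|)⁻¹ ∂(κ2 x) := by
      funext x
      rw [hκ2app]
    rw [this]
    exact h2
  have hWWmeas : Measurable (fun x : ℝ × (Ω × ℝ) => W x.2.1 x.2.2) := hW.comp measurable_snd
  -- ff is bounded by 1
  have hffle1 : ∀ (ω : Ω) (t r : ℝ), ff ω t r ≤ 1 := by
    intro ω t r
    calc ff ω t r ≤ ∫⁻ _ in Set.Ici (0:ℝ), 1 ∂(m ω t) :=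
          setLIntegral_mono measurable_const fun z _ =>
            ENNReal.inv_le_one.mpr (hw'one _)
      _ = m ω t (Set.Ici 0) := setLIntegral_one _
      _ ≤ m ω t Set.univ := measure_mono (Set.subset_univ _)
      _ ≤ 1 := hm1 ω t
  -- the full-line integral of the inverse weight is at most 1
  have hwline : (∫⁻ x : ℝ, (w' |x|)⁻¹) ≤ 1 := by
    have hmeasu : Measurable fun x : ℝ => (w' |x|)⁻¹ :=
      (hw'meas.comp measurable_abs).inv
    have hsplit := lintegral_add_compl (μ := volume) (fun x : ℝ => (w' |x|)⁻¹)
      (measurableSet_Ici (a := (0:ℝ)))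
    have hIci : (∫⁻ x in Set.Ici (0:ℝ), (w' |x|)⁻¹) ≤ 1/2 := by
      have : (∫⁻ x in Set.Ici (0:ℝ), (w' |x|)⁻¹) = ∫⁻ x in Set.Ici (0:ℝ), (w x)⁻¹ := by
        refine setLIntegral_congr_fun measurableSet_Ici ?_
        intro x hx
        beta_reduce
        rw [← hwe, abs_of_nonneg hx]
      rw [this]; exact hwhalf
    have hcompl : (Set.Ici (0:ℝ))ᶜ = Set.Iio 0 := by simp
    have hIio : (∫⁻ x in Set.Iio (0:ℝ), (w' |x|)⁻¹) ≤ 1/2 := by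
      have hneg : Set.Iio (0:ℝ) = Neg.neg ⁻¹' (Set.Ioi (0:ℝ)) := by
        ext x; simp
      have hmp := (Measure.measurePreserving_neg (volume : Measure ℝ))
      have hemb : MeasurableEmbedding (Neg.neg : ℝ → ℝ) :=
        (MeasurableEquiv.neg ℝ).measurableEmbedding
      have := hmp.setLIntegral_comp_preimage_emb hemb (fun x : ℝ => (w' |x|)⁻¹)
        (Set.Ioi (0:ℝ))
      rw [hneg]
      calc (∫⁻ x in Neg.neg ⁻¹' (Set.Ioi (0:ℝ)), (w' |x|)⁻¹)
          = ∫⁻ x in Neg.neg ⁻¹' (Set.Ioi (0:ℝ)), (w' |(-x)|)⁻¹ := by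
            refine lintegral_congr fun x => by rw [abs_neg]
        _ = ∫⁻ x in Set.Ioi (0:ℝ), (w' |x|)⁻¹ := this
        _ ≤ ∫⁻ x in Set.Ici (0:ℝ), (w' |x|)⁻¹ := lintegral_mono_set Set.Ioi_subset_Ici_self
        _ ≤ 1/2 := hIci
    calc (∫⁻ x : ℝ, (w' |x|)⁻¹)
        = (∫⁻ x in Set.Ici (0:ℝ), (w' |x|)⁻¹) + ∫⁻ x in (Set.Ici (0:ℝ))ᶜ, (w' |x|)⁻¹ :=
          hsplit.symm
      _ ≤ 1/2 + 1/2 := by rw [hcompl]; exact add_le_add hIci hIio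
      _ = 1 := ENNReal.add_halves 1
  -- Key bound A : for every ω t, ∫⁻ r in S', ff ω t r ≤ 1 (any S')
  have hkeyA : ∀ (ω : Ω) (t : ℝ) (S' : Set ℝ), (∫⁻ r in S', ff ω t r) ≤ 1 := by
    intro ω t S'
    haveI : IsFiniteMeasure (m ω t) := ⟨lt_of_le_of_lt (hm1 ω t) ENNReal.one_lt_top⟩
    have h1 : (∫⁻ r in S', ff ω t r) ≤ ∫⁻ r : ℝ, ff ω t r := setLIntegral_le_lintegral _ _
    have hswap : (∫⁻ r : ℝ, ∫⁻ z, (w' |r - z|)⁻¹ ∂((m ω t).restrict (Set.Ici 0)))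
        = ∫⁻ z, (∫⁻ r : ℝ, (w' |r - z|)⁻¹) ∂((m ω t).restrict (Set.Ici 0)) :=
      lintegral_lintegral_swap
        (((hw'meas.comp (measurable_fst.sub measurable_snd).abs)).inv).aemeasurable
    have h3 : ∀ z : ℝ, (∫⁻ r : ℝ, (w' |r - z|)⁻¹) ≤ 1 := by
      intro z
      have htrans := lintegral_add_right_eq_self (μ := (volume : Measure ℝ))
        (fun r : ℝ => (w' |r - z|)⁻¹) z
      simp only [add_sub_cancel_right] at htrans
      rw [← htrans]
      exact hwline
    have h4 : (∫⁻ z, (∫⁻ r : ℝ, (w' |r - z|)⁻¹) ∂((m ω t).restrict (Set.Ici 0)))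
        ≤ ∫⁻ _, 1 ∂((m ω t).restrict (Set.Ici 0)) := lintegral_mono fun z => h3 z
    have h5 : (∫⁻ _, (1:ℝ≥0∞) ∂((m ω t).restrict (Set.Ici 0))) ≤ 1 := by
      rw [lintegral_one, Measure.restrict_apply_univ]
      exact le_trans (measure_mono (Set.subset_univ _)) (hm1 ω t)
    calc (∫⁻ r in S', ff ω t r) ≤ ∫⁻ r : ℝ, ff ω t r := h1
      _ = ∫⁻ z, (∫⁻ r : ℝ, (w' |r - z|)⁻¹) ∂((m ω t).restrict (Set.Ici 0)) := by
          simp only [hffdef]; exact hswap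
      _ ≤ 1 := le_trans h4 h5
  -- the product measures
  set ν₀ : Measure ℝ := volume.restrict (Set.Ioc 0 T) with hν₀
  haveI : IsFiniteMeasure ν₀ := by
    constructor
    rw [hν₀, Measure.restrict_apply_univ]
    exact measure_Ioc_lt_top
  set μ2 : Measure (Ω × ℝ) := ℙ.prod ν₀ with hμ2
  -- Key bound B : ∫⁻ x ∂μ2, W^p ≤ ofReal T * β
  have hWp : Measurable fun x : Ω × ℝ => W x.1 x.2 ^ p := hW.pow_const p
  have hkeyB : (∫⁻ x, W x.1 x.2 ^ p ∂μ2) ≤ ENNReal.ofReal T * β := by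
    have h1 : (∫⁻ x, W x.1 x.2 ^ p ∂μ2) = ∫⁻ t, (∫⁻ ω, W ω t ^ p ∂ℙ) ∂ν₀ :=
      lintegral_prod_symm _ hWp.aemeasurable
    have h2 : (∫⁻ t, (∫⁻ ω, W ω t ^ p ∂ℙ) ∂ν₀) ≤ ∫⁻ _, β ∂ν₀ := by
      rw [hν₀]
      refine setLIntegral_mono measurable_const fun t ht => hWt t (le_of_lt ht.1)
    have h3 : (∫⁻ _, β ∂ν₀) = ENNReal.ofReal T * β := by
      rw [lintegral_const, hν₀, Measure.restrict_apply_univ, Real.volume_Ioc, sub_zero,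
        mul_comm]
    rw [h1, ← h3]; exact h2
  -- the undercharged set
  set g : ℝ → ℝ≥0∞ := fun r => ∫⁻ ω, (∫⁻ t in Set.Ici (0:ℝ), ff ω t r) ∂ℙ with hg
  set S : Set ℝ := {r : ℝ | r ∈ Set.Icc (max C₀ N₀) R ∧ g r ≤ ENNReal.ofReal (α / r)}
    with hS
  set μ2' : Measure (Ω × ℝ) := ℙ.prod (volume.restrict (Set.Ici (0:ℝ))) with hμ2'
  have hgprod : ∀ r : ℝ, g r = ∫⁻ x, FF (r, x) ∂μ2' := by
    intro r
    simp only [hg, hμ2']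
    exact (lintegral_prod (fun x : Ω × ℝ => FF (r, x))
      ((hFFmeas.comp (measurable_const.prodMk measurable_id)).aemeasurable)).symm
  have hgmeas : Measurable g := by
    have h := Measurable.lintegral_prod_right' (ν := μ2') (f := FF) hFFmeas
    have heq : g = fun r => ∫⁻ x, FF (r, x) ∂μ2' := funext hgprod
    rw [heq]; exact h
  have hhmeas : Measurable fun r : ℝ => ENNReal.ofReal (α / r) :=
    ENNReal.measurable_ofReal.comp (measurable_const.div measurable_id)
  have hSmeas : MeasurableSet S := by
    rw [hS]
    have : {r : ℝ | r ∈ Set.Icc (max C₀ N₀) R ∧ g r ≤ ENNReal.ofReal (α / r)}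
        = Set.Icc (max C₀ N₀) R ∩ {r : ℝ | g r ≤ ENNReal.ofReal (α / r)} := rfl
    rw [this]
    exact measurableSet_Icc.inter (measurableSet_le hgmeas hhmeas)
  have hSsub : S ⊆ Set.Icc (max C₀ N₀) R := fun r hr => hr.1
  have hSone : ∀ r ∈ S, (1:ℝ) ≤ r := fun r hr =>
    le_trans (le_trans hC₀ (le_max_left _ _)) hr.1.1
  set M : ℝ≥0∞ := ∫⁻ r in S, ENNReal.ofReal r⁻¹ with hM
  have hMfin : M ≠ ⊤ := by
    have h1 : M ≤ ∫⁻ _ in S, 1 := by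
      rw [hM]
      refine setLIntegral_mono measurable_const fun r hr => ?_
      refine ENNReal.ofReal_le_one.mpr (inv_le_one_of_one_le₀ (hSone r hr))
    have h2 : (∫⁻ _ in S, (1:ℝ≥0∞)) = volume S := setLIntegral_one _
    have h3 : volume S ≤ volume (Set.Icc (max C₀ N₀) R) := measure_mono hSsub
    exact ne_top_of_le_ne_top (ne_of_lt measure_Icc_lt_top) (h1.trans (h2.le.trans h3))
  -- identify the set in the goal with S
  have hSgoal : {r : ℝ | r ∈ Set.Icc (max C₀ N₀) R ∧
      (∫⁻ ω, (∫⁻ t in Set.Ici (0:ℝ),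
        ∫⁻ z in Set.Ici (0:ℝ), (w |r - z|)⁻¹ ∂(m ω t)) ∂ℙ) ≤ ENNReal.ofReal (α / r)} = S := by
    rw [hS]
    ext r
    simp only [Set.mem_setOf_eq, hg]
    constructor
    · rintro ⟨h1, h2⟩
      refine ⟨h1, ?_⟩
      refine le_trans (le_of_eq ?_) h2
      exact lintegral_congr fun ω => lintegral_congr fun t => (hffe ω t r).symm
    · rintro ⟨h1, h2⟩
      refine ⟨h1, ?_⟩
      refine le_trans (le_of_eq ?_) h2
      exact lintegral_congr fun ω => lintegral_congr fun t => (hffe ω t r)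
  -- the flux hypothesis in product form
  have hGmeas : Measurable fun x : ℝ × (Ω × ℝ) => W x.2.1 x.2.2 * FF x := hWWmeas.mul hFFmeas
  have hflux' : ∀ r ∈ Set.Icc (max C₀ N₀) R,
      ENNReal.ofReal (1 / (C₀ * r)) ≤ ∫⁻ x, W x.1 x.2 * FF (r, x) ∂μ2 := by
    intro r hr
    have h1 := hflux r hr
    have h2 : (∫⁻ ω, (∫⁻ t in Set.Ioc 0 T,
        W ω t * ∫⁻ z in Set.Ici (0:ℝ), (w |r - z|)⁻¹ ∂(m ω t)) ∂ℙ)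
        = ∫⁻ x, W x.1 x.2 * FF (r, x) ∂μ2 := by
      have h3 : (∫⁻ ω, (∫⁻ t in Set.Ioc 0 T,
          W ω t * ∫⁻ z in Set.Ici (0:ℝ), (w |r - z|)⁻¹ ∂(m ω t)) ∂ℙ)
          = ∫⁻ ω, (∫⁻ t in Set.Ioc 0 T, W ω t * ff ω t r) ∂ℙ :=
        lintegral_congr fun ω => lintegral_congr fun t => by rw [hffe]
      rw [h3, hμ2]
      exact (lintegral_prod (fun x : Ω × ℝ => W x.1 x.2 * FF (r, x))
        ((hW.mul (hFFmeas.comp (measurable_const.prodMk measurable_id))).aemeasurable)).symm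
    rw [← h2]; exact h1
  -- the triple product measure
  haveI : IsFiniteMeasure (volume.restrict S) := by
    constructor
    rw [Measure.restrict_apply_univ]
    exact lt_of_le_of_lt (measure_mono hSsub) measure_Icc_lt_top
  set μ3 : Measure (ℝ × (Ω × ℝ)) := (volume.restrict S).prod μ2 with hμ3
  set I : ℝ≥0∞ := ∫⁻ x, W x.2.1 x.2.2 * FF x ∂μ3 with hI
  -- Step 1 : M ≤ C₀ * I
  have hstep1 : M ≤ ENNReal.ofReal C₀ * I := by
    have hmeasin : Measurable fun r : ℝ => ∫⁻ x, W x.1 x.2 * FF (r, x) ∂μ2 := by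
      have := Measurable.lintegral_prod_right' (ν := μ2)
        (f := fun y : ℝ × (Ω × ℝ) => W y.2.1 y.2.2 * FF y) hGmeas
      exact this
    have h1 : M ≤ ∫⁻ r in S, ENNReal.ofReal C₀ * ∫⁻ x, W x.1 x.2 * FF (r, x) ∂μ2 := by
      rw [hM]
      refine setLIntegral_mono (measurable_const.mul hmeasin) fun r hr => ?_
      have hr1 : (1:ℝ) ≤ r := hSone r hr
      have heq : ENNReal.ofReal r⁻¹ = ENNReal.ofReal C₀ * ENNReal.ofReal (1 / (C₀ * r)) := by
        rw [← ENNReal.ofReal_mul (le_of_lt hC₀0)]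
        congr 1
        field_simp
      rw [heq]
      exact mul_le_mul_right (hflux' r hr.1) _
    have h2 : (∫⁻ r in S, ENNReal.ofReal C₀ * ∫⁻ x, W x.1 x.2 * FF (r, x) ∂μ2)
        = ENNReal.ofReal C₀ * ∫⁻ r in S, ∫⁻ x, W x.1 x.2 * FF (r, x) ∂μ2 :=
      lintegral_const_mul _ hmeasin
    have h3 : (∫⁻ r in S, ∫⁻ x, W x.1 x.2 * FF (r, x) ∂μ2) = I := by
      rw [hI, hμ3]
      exact (lintegral_prod _ hGmeas.aemeasurable).symm
    calc M ≤ _ := h1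
      _ = _ := h2
      _ = ENNReal.ofReal C₀ * I := by rw [h3]
  -- Hölder
  have hsum : 1/p + 1/q = 1 := by
    have := hpq.inv_add_inv_eq_one
    rw [one_div, one_div]; exact this
  have hF1meas : Measurable fun x : ℝ × (Ω × ℝ) => W x.2.1 x.2.2 * FF x ^ (1/p) :=
    hWWmeas.mul (hFFmeas.pow_const _)
  have hF2meas : Measurable fun x : ℝ × (Ω × ℝ) => FF x ^ (1/q) := hFFmeas.pow_const _
  have hholder : I ≤ (∫⁻ x, (W x.2.1 x.2.2 * FF x ^ (1/p)) ^ p ∂μ3) ^ (1/p) *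
      (∫⁻ x, (FF x ^ (1/q)) ^ q ∂μ3) ^ (1/q) := by
    have hsplit : (fun x : ℝ × (Ω × ℝ) => W x.2.1 x.2.2 * FF x) =
        (fun x => W x.2.1 x.2.2 * FF x ^ (1/p)) * (fun x => FF x ^ (1/q)) := by
      funext x
      simp only [Pi.mul_apply]
      rw [mul_assoc, ← ENNReal.rpow_add_of_nonneg _ _ (by positivity) (by positivity),
        hsum, ENNReal.rpow_one]
    rw [hI, hsplit]
    exact ENNReal.lintegral_mul_le_Lp_mul_Lq μ3 hpq hF1meas.aemeasurable hF2meas.aemeasurable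
  -- Factor 1 bound
  have hfact1 : (∫⁻ x, (W x.2.1 x.2.2 * FF x ^ (1/p)) ^ p ∂μ3) ≤ ENNReal.ofReal T * β := by
    have hpt : ∀ x : ℝ × (Ω × ℝ), (W x.2.1 x.2.2 * FF x ^ (1/p)) ^ p
        = W x.2.1 x.2.2 ^ p * FF x := by
      intro x
      rw [ENNReal.mul_rpow_of_nonneg _ _ (le_of_lt hp0), ← ENNReal.rpow_mul,
        one_div_mul_cancel (ne_of_gt hp0), ENNReal.rpow_one]
    have h1 : (∫⁻ x, (W x.2.1 x.2.2 * FF x ^ (1/p)) ^ p ∂μ3)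
        = ∫⁻ x, W x.2.1 x.2.2 ^ p * FF x ∂μ3 := lintegral_congr hpt
    have h2 : (∫⁻ x, W x.2.1 x.2.2 ^ p * FF x ∂μ3)
        = ∫⁻ y, (∫⁻ r in S, W y.1 y.2 ^ p * FF (r, y)) ∂μ2 := by
      rw [hμ3]
      exact lintegral_prod_symm _ ((hWWmeas.pow_const p).mul hFFmeas).aemeasurable
    have h3 : ∀ y : Ω × ℝ, (∫⁻ r in S, W y.1 y.2 ^ p * FF (r, y)) ≤ W y.1 y.2 ^ p := by
      intro y
      have hm : Measurable fun r : ℝ => FF (r, y) :=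
        hFFmeas.comp (measurable_id.prodMk measurable_const)
      rw [lintegral_const_mul _ hm]
      calc W y.1 y.2 ^ p * ∫⁻ r in S, FF (r, y)
          ≤ W y.1 y.2 ^ p * 1 := mul_le_mul_right (hkeyA y.1 y.2 S) _
        _ = W y.1 y.2 ^ p := mul_one _
    calc (∫⁻ x, (W x.2.1 x.2.2 * FF x ^ (1/p)) ^ p ∂μ3)
        = ∫⁻ y, (∫⁻ r in S, W y.1 y.2 ^ p * FF (r, y)) ∂μ2 := by rw [h1, h2]
      _ ≤ ∫⁻ y, W y.1 y.2 ^ p ∂μ2 := lintegral_mono h3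
      _ ≤ ENNReal.ofReal T * β := hkeyB
  -- Factor 2 bound
  have hfact2 : (∫⁻ x, (FF x ^ (1/q)) ^ q ∂μ3) ≤ ENNReal.ofReal α * M := by
    have hpt : ∀ x : ℝ × (Ω × ℝ), (FF x ^ (1/q)) ^ q = FF x := by
      intro x
      rw [← ENNReal.rpow_mul, one_div_mul_cancel (ne_of_gt hq0), ENNReal.rpow_one]
    have h1 : (∫⁻ x, (FF x ^ (1/q)) ^ q ∂μ3) = ∫⁻ r in S, (∫⁻ y, FF (r, y) ∂μ2) := by
      rw [hμ3, lintegral_congr hpt]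
      exact lintegral_prod _ hFFmeas.aemeasurable
    have h2 : ∀ r ∈ S, (∫⁻ y, FF (r, y) ∂μ2) ≤ ENNReal.ofReal α * ENNReal.ofReal r⁻¹ := by
      intro r hr
      have hr0 : (0:ℝ) < r := lt_of_lt_of_le one_pos (hSone r hr)
      have hup : (∫⁻ y, FF (r, y) ∂μ2) ≤ g r := by
        have e1 : (∫⁻ y, FF (r, y) ∂μ2) = ∫⁻ ω, (∫⁻ t in Set.Ioc 0 T, ff ω t r) ∂ℙ := by
          rw [hμ2]
          exact lintegral_prod (fun y : Ω × ℝ => FF (r, y))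
            ((hFFmeas.comp (measurable_const.prodMk measurable_id)).aemeasurable)
        rw [e1]
        simp only [hg]
        refine lintegral_mono fun ω => ?_
        refine lintegral_mono_set ?_
        intro t ht
        exact le_of_lt ht.1
      have hα' : ENNReal.ofReal (α / r) = ENNReal.ofReal α * ENNReal.ofReal r⁻¹ := by
        rw [← ENNReal.ofReal_mul (le_of_lt hα), div_eq_mul_inv]
      calc (∫⁻ y, FF (r, y) ∂μ2) ≤ g r := hup
        _ ≤ ENNReal.ofReal (α / r) := hr.2
        _ = ENNReal.ofReal α * ENNReal.ofReal r⁻¹ := hα'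
    have hmeasr : Measurable fun r : ℝ => ENNReal.ofReal α * ENNReal.ofReal r⁻¹ :=
      measurable_const.mul (ENNReal.measurable_ofReal.comp measurable_inv)
    calc (∫⁻ x, (FF x ^ (1/q)) ^ q ∂μ3) = ∫⁻ r in S, (∫⁻ y, FF (r, y) ∂μ2) := h1
      _ ≤ ∫⁻ r in S, ENNReal.ofReal α * ENNReal.ofReal r⁻¹ := setLIntegral_mono hmeasr h2
      _ = ENNReal.ofReal α * M := by
          rw [hM]
          exact lintegral_const_mul _ (ENNReal.measurable_ofReal.comp measurable_inv)
  -- combine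
  set K : ℝ≥0∞ := ENNReal.ofReal C₀ * (ENNReal.ofReal T * β) ^ (1/p) *
    (ENNReal.ofReal α) ^ (1/q) with hK
  have hmain : M ≤ K * M ^ (1/q) := by
    calc M ≤ ENNReal.ofReal C₀ * I := hstep1
      _ ≤ ENNReal.ofReal C₀ * ((∫⁻ x, (W x.2.1 x.2.2 * FF x ^ (1/p)) ^ p ∂μ3) ^ (1/p) *
            (∫⁻ x, (FF x ^ (1/q)) ^ q ∂μ3) ^ (1/q)) := mul_le_mul_right hholder _
      _ ≤ ENNReal.ofReal C₀ * ((ENNReal.ofReal T * β) ^ (1/p) *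
            (ENNReal.ofReal α * M) ^ (1/q)) := by
          refine mul_le_mul_right (mul_le_mul' ?_ ?_) _
          · exact ENNReal.rpow_le_rpow hfact1 (by positivity)
          · exact ENNReal.rpow_le_rpow hfact2 (by positivity)
      _ = K * M ^ (1/q) := by
          rw [hK, ENNReal.mul_rpow_of_nonneg _ _ (by positivity : (0:ℝ) ≤ 1/q)]
          ring
  have hMK : M ≤ K ^ p := by
    rcases eq_or_ne M 0 with hM0 | hM0
    · rw [hM0]; exact bot_le
    · have hq0' : (0:ℝ) < 1/q := by positivity
      have hMq0 : M ^ (1/q) ≠ 0 := by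
        rw [Ne, ENNReal.rpow_eq_zero_iff]
        push_neg
        exact ⟨fun h => absurd h hM0, fun h => absurd h hMfin⟩
      have hMqtop : M ^ (1/q) ≠ ⊤ := by
        exact ne_of_lt (ENNReal.rpow_lt_top_of_nonneg (le_of_lt hq0') hMfin)
      have hsplitM : M = M ^ (1/p) * M ^ (1/q) := by
        rw [← ENNReal.rpow_add_of_nonneg _ _ (by positivity) (by positivity), hsum,
          ENNReal.rpow_one]
      have h1 : M ^ (1/p) * M ^ (1/q) ≤ K * M ^ (1/q) := by rw [← hsplitM]; exact hmain
      have h2 : M ^ (1/p) ≤ K := (ENNReal.mul_le_mul_iff_left hMq0 hMqtop).mp h1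
      calc M = (M ^ (1/p)) ^ p := by
            rw [← ENNReal.rpow_mul, one_div_mul_cancel (ne_of_gt hp0), ENNReal.rpow_one]
        _ ≤ K ^ p := ENNReal.rpow_le_rpow h2 (le_of_lt hp0)
  -- compute K ^ p
  have hKp : K ^ p ≤ ENNReal.ofReal (C₀ ^ p) * (ENNReal.ofReal T * β) *
      ENNReal.ofReal (α ^ (p - 1)) := by
    have hpq' : (1/q) * p = p - 1 := by
      have : q = p / (p - 1) := hq
      rw [this]
      field_simp
    rw [hK, ENNReal.mul_rpow_of_nonneg _ _ (le_of_lt hp0),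
      ENNReal.mul_rpow_of_nonneg _ _ (le_of_lt hp0), ← ENNReal.rpow_mul,
      ← ENNReal.rpow_mul, one_div_mul_cancel (ne_of_gt hp0), ENNReal.rpow_one, hpq',
      ENNReal.ofReal_rpow_of_pos hC₀0, ENNReal.ofReal_rpow_of_pos hα]
  -- the real-number inequality
  set L : ℝ := Real.log (R / N₀) with hL
  have hLdiv : L = Real.log R - Real.log N₀ :=
    Real.log_div (ne_of_gt (lt_trans one_pos hR1)) (ne_of_gt hN₀0)
  have hlogN : 2 * Real.log N₀ ≤ Real.log R := by
    have h1 : Real.log (N₀ ^ 2) ≤ Real.log R := Real.log_le_log (by positivity) hRN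
    rw [Real.log_pow] at h1
    push_cast at h1
    linarith
  have hL2 : Real.log R / 2 ≤ L := by rw [hLdiv]; linarith
  have hL0 : (0:ℝ) < L := lt_of_lt_of_le (by positivity) hL2
  have hreal : C₀ ^ p * T / L ≤ (2 * C₀ ^ 2) ^ p := by
    have hnum : (0:ℝ) ≤ C₀ ^ p * T := by positivity
    have h1 : C₀ ^ p * T / L ≤ C₀ ^ p * T / (Real.log R / 2) := by
      exact div_le_div_of_nonneg_left hnum (by positivity) hL2
    have h2 : C₀ ^ p * T / (Real.log R / 2) = 2 * (C₀ ^ p * C₀) := by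
      rw [hT]
      field_simp
    have h2p : (2:ℝ) ≤ 2 ^ p := by
      calc (2:ℝ) = 2 ^ (1:ℝ) := (Real.rpow_one 2).symm
        _ ≤ 2 ^ p := Real.rpow_le_rpow_of_exponent_le one_le_two (le_of_lt hp)
    have hC : C₀ ^ p * C₀ = C₀ ^ (p + 1) := by rw [Real.rpow_add hC₀0, Real.rpow_one]
    have hC2 : C₀ ^ (p + 1) ≤ C₀ ^ (2 * p) := Real.rpow_le_rpow_of_exponent_le hC₀ (by linarith)
    have h4 : (2 * C₀ ^ 2) ^ p = 2 ^ p * C₀ ^ (2 * p) := by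
      rw [Real.mul_rpow (by norm_num) (by positivity)]
      congr 1
      rw [← Real.rpow_natCast C₀ 2, ← Real.rpow_mul (le_of_lt hC₀0)]
      norm_num
    calc C₀ ^ p * T / L ≤ C₀ ^ p * T / (Real.log R / 2) := h1
      _ = 2 * (C₀ ^ p * C₀) := h2
      _ = 2 * C₀ ^ (p + 1) := by rw [hC]
      _ ≤ 2 ^ p * C₀ ^ (2 * p) := by
          refine mul_le_mul h2p hC2 (by positivity) (by positivity)
      _ = (2 * C₀ ^ 2) ^ p := h4.symm
  -- core ENNReal inequality
  have hcore : (ENNReal.ofReal L)⁻¹ * (ENNReal.ofReal (C₀ ^ p) * ENNReal.ofReal T)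
      ≤ ENNReal.ofReal ((2 * C₀ ^ 2) ^ p) := by
    rw [← ENNReal.ofReal_mul (by positivity), ← ENNReal.div_eq_inv_mul,
      ← ENNReal.ofReal_div_of_pos hL0]
    exact ENNReal.ofReal_le_ofReal hreal
  -- finish
  rw [hSgoal]
  rw [logDensity]
  calc (ENNReal.ofReal (Real.log (R / N₀)))⁻¹ *
        ∫⁻ r in S ∩ Set.Icc N₀ R, ENNReal.ofReal r⁻¹
      ≤ (ENNReal.ofReal L)⁻¹ * M := by
        rw [← hL, hM]
        exact mul_le_mul_right (lintegral_mono_set Set.inter_subset_left) _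
    _ ≤ (ENNReal.ofReal L)⁻¹ * (ENNReal.ofReal (C₀ ^ p) * (ENNReal.ofReal T * β) *
          ENNReal.ofReal (α ^ (p - 1))) := mul_le_mul_right (le_trans hMK hKp) _
    _ = ((ENNReal.ofReal L)⁻¹ * (ENNReal.ofReal (C₀ ^ p) * ENNReal.ofReal T)) *
          (β * ENNReal.ofReal (α ^ (p - 1))) := by ring
    _ ≤ ENNReal.ofReal ((2 * C₀ ^ 2) ^ p) * (β * ENNReal.ofReal (α ^ (p - 1))) :=
        mul_le_mul_left hcore _
    _ = ENNReal.ofReal ((2 * C₀ ^ 2) ^ p) * β * ENNReal.ofReal (α ^ (p - 1)) := by ring
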